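/- arXiv:1003.4035 — 2 statements merged into one kernel-verified Lean document; each statement's English description precedes it below -/
import Mathlib

section
/- Let H: R^{2n} → R satisfy (H0)–(H2), let M > M*, and fix p ∈ R^{2n−ℓ} \ {0}. Then: (a) for each q ∈ R^ℓ there is exactly one s > 0 with H(s·p, q) = M; (b) consequently there exists a unique function σ: R^ℓ → (0,∞) with H(σ(q)·p, q) = M for all q, and this σ is C² and satisfies σ(q+m) = σ(q) for all q ∈ R^ℓ and m ∈ Z^ℓ. -/
noncomputable section
open scoped RealInnerProductSpace

/-- `ℝ^{2n}` as a Euclidean space. -/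
abbrev E2 (n : ℕ) := EuclideanSpace ℝ (Fin (2*n))

/-- The standard symplectic matrix `J` on `ℝ^{2n} = ℝ^n × ℝ^n`, `J(u,v) = (-v,u)`. -/
def Jsymp (n : ℕ) (x : E2 n) : E2 n :=
  WithLp.toLp 2 (fun i => if h : (i : ℕ) < n then -x ⟨(i : ℕ) + n, by omega⟩
           else x ⟨(i : ℕ) - n, by have := i.isLt; omega⟩)

/-- The vector `(0,m) ∈ ℝ^{2n-ℓ} × ℝ^ℓ` whose `q`-part (last `ℓ` coordinates) is the
integer vector `m ∈ ℤ^ℓ` and whose `p`-part vanishes. -/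
def qVec (n l : ℕ) (m : Fin l → ℤ) : E2 n :=
  WithLp.toLp 2 (fun i => if h : 2*n - l ≤ (i : ℕ) then
      (m ⟨(i : ℕ) - (2*n - l), by have := i.isLt; omega⟩ : ℝ) else 0)

/-- The vector `(p,0)`: projection of `x = (p,q)` onto the first `2n-ℓ` coordinates. -/
def projP (n l : ℕ) (x : E2 n) : E2 n := WithLp.toLp 2 (fun i => if (i : ℕ) < 2*n - l then x i else 0)

/-- `|p|` : the Euclidean norm of the first `2n-ℓ` coordinates of `x = (p,q)`. -/
def pnorm (n l : ℕ) (x : E2 n) : ℝ := ‖projP n l x‖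

/-- Embedding of `ℝ^ℓ` into the last `ℓ` coordinates of `ℝ^{2n}` (the `q`-part). -/
def qEmb (n l : ℕ) (q : EuclideanSpace ℝ (Fin l)) : E2 n :=
  WithLp.toLp 2 (fun i => if h : 2*n - l ≤ (i : ℕ) then
      q ⟨(i : ℕ) - (2*n - l), by have := i.isLt; omega⟩ else 0)

/-- An integer vector `m ∈ ℤ^ℓ` regarded as an element of `ℝ^ℓ`. -/
def intVec (l : ℕ) (m : Fin l → ℤ) : EuclideanSpace ℝ (Fin l) := WithLp.toLp 2 (fun i => (m i : ℝ))
set_option linter.unusedVariables false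

def auxEquiv {Q : Type*} [NormedAddCommGroup Q] [NormedSpace ℝ Q] [FiniteDimensional ℝ Q]
    (D : ℝ × Q →L[ℝ] ℝ) (κ : ℝ) (hκ : κ ≠ 0) (hD : D (1,0) = κ) : (ℝ × Q) ≃L[ℝ] (ℝ × Q) := by
  have hsplit : ∀ (t : ℝ) (v : Q), D (t, v) = t * κ + D (0, v) := by
    intro t v
    have h : (t, v) = t • ((1:ℝ), (0:Q)) + ((0:ℝ), v) := by simp
    rw [h, map_add, map_smul, hD]; simp [smul_eq_mul]
  exact LinearEquiv.toContinuousLinearEquiv <| LinearEquiv.ofLinear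
    ((D.prod (ContinuousLinearMap.snd ℝ ℝ Q)) : ℝ × Q →ₗ[ℝ] ℝ × Q)
    { toFun := fun z => ((z.1 - D (0, z.2)) / κ, z.2)
      map_add' := by
        intro z w
        simp only [Prod.fst_add, Prod.snd_add, Prod.mk_add_mk, Prod.mk.injEq]
        refine ⟨?_, trivial⟩
        rw [show ((0:ℝ), z.2 + w.2) = ((0:ℝ), z.2) + ((0:ℝ), w.2) by simp, map_add]
        ring
      map_smul' := by
        intro c z
        simp only [Prod.smul_fst, Prod.smul_snd, RingHom.id_apply, Prod.smul_mk, smul_eq_mul]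
        refine Prod.ext ?_ rfl
        rw [show ((0:ℝ), c • z.2) = c • ((0:ℝ), z.2) by simp, map_smul, smul_eq_mul]
        ring }
    (LinearMap.ext fun z => by
      have h := hsplit z.1 z.2
      show (D ((z.1 - D (0, z.2)) / κ, z.2), z.2) = z
      rw [hsplit]
      rw [← Prod.mk.eta (p := z), Prod.mk.injEq]
      exact ⟨by field_simp; ring, rfl⟩)
    (LinearMap.ext fun z => by
      have h := hsplit z.1 z.2
      rw [Prod.mk.eta] at h
      show ((D z - D (0, z.2)) / κ, z.2) = z
      rw [h, ← Prod.mk.eta (p := z), Prod.mk.injEq]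
      refine ⟨by field_simp; ring, rfl⟩)

lemma auxEquiv_coe {Q : Type*} [NormedAddCommGroup Q] [NormedSpace ℝ Q] [FiniteDimensional ℝ Q]
    (D : ℝ × Q →L[ℝ] ℝ) (κ : ℝ) (hκ : κ ≠ 0) (hD : D (1,0) = κ) :
    (auxEquiv D κ hκ hD : ℝ × Q →L[ℝ] ℝ × Q) = D.prod (ContinuousLinearMap.snd ℝ ℝ Q) :=
  ContinuousLinearMap.ext fun _ => rfl

def qEmbL (n l : ℕ) : EuclideanSpace ℝ (Fin l) →L[ℝ] E2 n :=
  LinearMap.toContinuousLinearMap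
  { toFun := qEmb n l
    map_add' := by intro q q'; ext i; simp only [qEmb, PiLp.add_apply, PiLp.toLp_apply]; split_ifs <;> simp
    map_smul' := by
      intro c q; ext i
      simp only [qEmb, PiLp.toLp_apply, PiLp.smul_apply, RingHom.id_apply, smul_eq_mul]
      split_ifs <;> simp }

lemma qEmbL_apply (n l : ℕ) (q : EuclideanSpace ℝ (Fin l)) : qEmbL n l q = qEmb n l q := rfl

lemma projP_smul_add_qEmb (n l : ℕ) (p : E2 n) (hp0 : projP n l p = p)
    (s : ℝ) (q : EuclideanSpace ℝ (Fin l)) :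
    projP n l (s • p + qEmb n l q) = s • p := by
  conv_rhs => rw [← hp0]
  ext i
  simp only [projP, qEmb, PiLp.toLp_apply, PiLp.add_apply, PiLp.smul_apply, smul_eq_mul]
  split_ifs with h h2 <;> simp_all <;> omega

lemma qEmb_add_intVec (n l : ℕ) (q : EuclideanSpace ℝ (Fin l)) (m : Fin l → ℤ) :
    qEmb n l (q + intVec l m) = qEmb n l q + qVec n l m := by
  ext i
  simp only [qEmb, qVec, intVec, PiLp.toLp_apply, PiLp.add_apply]
  split_ifs <;> simp

/-- Proposition 2.1(ii): for fixed `p ≠ 0` in the `p`-subspace, for each `q` there is a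
unique `s > 0` with `H(s·p, q) = M`; the resulting function `σ` is the unique positive
solution of `H(σ(q)·p, q) = M`, is `C²`, and is `ℤ^ℓ`-periodic. -/
theorem unique_radial_scaling
    (n l : ℕ) (hn : 1 ≤ n) (hl : 1 ≤ l) (hl2 : l ≤ 2*n)
    (H : E2 n → ℝ) (μ r : ℝ)
    (hH0 : ContDiff ℝ 2 H)
    (hH1 : ∀ (x : E2 n) (m : Fin l → ℤ), H (x + qVec n l m) = H x)
    (hμ : 0 < μ) (hr : 0 < r)
    (hH2 : ∀ x : E2 n, r ≤ pnorm n l x →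
      0 < μ * H x ∧ μ * H x ≤ ⟪gradient H x, projP n l x⟫)
    (M : ℝ) (hM : ∀ x : E2 n, pnorm n l x ≤ r → H x < M)
    (p : E2 n) (hp0 : projP n l p = p) (hpne : p ≠ 0) :
    (∀ q : EuclideanSpace ℝ (Fin l), ∃! s : ℝ, 0 < s ∧ H (s • p + qEmb n l q) = M) ∧
    ∃ σ : EuclideanSpace ℝ (Fin l) → ℝ,
      ((∀ q, 0 < σ q) ∧ (∀ q, H (σ q • p + qEmb n l q) = M) ∧
        ContDiff ℝ 2 σ ∧ (∀ q (m : Fin l → ℤ), σ (q + intVec l m) = σ q)) ∧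
      ∀ σ' : EuclideanSpace ℝ (Fin l) → ℝ,
        ((∀ q, 0 < σ' q) ∧ (∀ q, H (σ' q • p + qEmb n l q) = M)) → σ' = σ := by
  classical
  have hnp : 0 < ‖p‖ := norm_pos_iff.mpr hpne
  set s0 : ℝ := r / ‖p‖ with hs0def
  have hs0 : 0 < s0 := div_pos hr hnp
  have hs0r : s0 * ‖p‖ = r := div_mul_cancel₀ r (ne_of_gt hnp)
  set F : ℝ → EuclideanSpace ℝ (Fin l) → ℝ := fun s q => H (s • p + qEmb n l q) with hFdef
  have hpn : ∀ (s : ℝ) (q : EuclideanSpace ℝ (Fin l)),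
      pnorm n l (s • p + qEmb n l q) = |s| * ‖p‖ := by
    intro s q
    unfold pnorm
    rw [projP_smul_add_qEmb n l p hp0, norm_smul]
    simp [Real.norm_eq_abs]
  have hderiv : ∀ (q : EuclideanSpace ℝ (Fin l)) (s : ℝ),
      HasDerivAt (fun t => F t q) ⟪gradient H (s • p + qEmb n l q), p⟫ s := by
    intro q s
    have h1 : HasDerivAt (fun t : ℝ => t • p + qEmb n l q) p s := by
      simpa using ((hasDerivAt_id s).smul_const p).add_const (qEmb n l q)
    have h2 : DifferentiableAt ℝ H (s • p + qEmb n l q) :=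
      (hH0.differentiable (by simp)).differentiableAt
    have h3 := (h2.hasGradientAt.hasFDerivAt).comp_hasDerivAt s h1
    exact h3
  have hd2 : ∀ (q : EuclideanSpace ℝ (Fin l)) (s : ℝ), s0 ≤ s →
      0 < F s q ∧ μ * F s q ≤ s * ⟪gradient H (s • p + qEmb n l q), p⟫ := by
    intro q s hs
    have hspos : 0 < s := lt_of_lt_of_le hs0 hs
    have hrle : r ≤ pnorm n l (s • p + qEmb n l q) := by
      rw [hpn s q, abs_of_pos hspos, ← hs0r]
      exact mul_le_mul_of_nonneg_right hs (le_of_lt hnp)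
    obtain ⟨h1, h2⟩ := hH2 _ hrle
    rw [projP_smul_add_qEmb n l p hp0, real_inner_smul_right] at h2
    refine ⟨?_, h2⟩
    rcases mul_pos_iff.mp h1 with h | h
    · exact h.2
    · exact absurd h.1 (not_lt.mpr hμ.le)
  have hdpos : ∀ (q : EuclideanSpace ℝ (Fin l)) (s : ℝ), s0 ≤ s →
      0 < ⟪gradient H (s • p + qEmb n l q), p⟫ := by
    intro q s hs
    obtain ⟨h1, h2⟩ := hd2 q s hs
    have hspos : 0 < s := lt_of_lt_of_le hs0 hs
    nlinarith [mul_pos hμ h1]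
  have hFcont : ∀ q : EuclideanSpace ℝ (Fin l), Continuous (fun s => F s q) :=
    fun q => hH0.continuous.comp ((continuous_id.smul continuous_const).add continuous_const)
  have hmono : ∀ q : EuclideanSpace ℝ (Fin l), StrictMonoOn (fun s => F s q) (Set.Ici s0) := by
    intro q
    refine strictMonoOn_of_deriv_pos (convex_Ici s0) (hFcont q).continuousOn ?_
    intro x hx
    rw [interior_Ici] at hx
    rw [(hderiv q x).deriv]
    exact hdpos q x (le_of_lt hx)
  have hsmall : ∀ (q : EuclideanSpace ℝ (Fin l)) (s : ℝ), 0 < s → s ≤ s0 → F s q < M := by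
    intro q s hs hss0
    apply hM
    rw [hpn s q, abs_of_pos hs, ← hs0r]
    exact mul_le_mul_of_nonneg_right hss0 (le_of_lt hnp)
  have habove : ∀ (q : EuclideanSpace ℝ (Fin l)) (s : ℝ), 0 < s → F s q = M → s0 < s := by
    intro q s hs hFs
    by_contra hcon
    push_neg at hcon
    exact absurd hFs (ne_of_lt (hsmall q s hs hcon))
  have hEU : ∀ q : EuclideanSpace ℝ (Fin l), ∃! s : ℝ, 0 < s ∧ F s q = M := by
    intro q
    have hF0pos : 0 < F s0 q := (hd2 q s0 le_rfl).1
    have hF0lt : F s0 q < M := hsmall q s0 hs0 le_rfl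
    set c : ℝ := μ * F s0 q with hcdef
    have hc : 0 < c := mul_pos hμ hF0pos
    have hlogcont : ContinuousOn Real.log (Set.Ici s0) :=
      Real.continuousOn_log.mono (fun x hx => ne_of_gt (lt_of_lt_of_le hs0 hx))
    have hder : ∀ x ∈ Set.Ici s0, HasDerivAt (fun s => F s q - c * Real.log s)
        (⟪gradient H (x • p + qEmb n l q), p⟫ - c * x⁻¹) x := by
      intro x hx
      have hxpos : 0 < x := lt_of_lt_of_le hs0 hx
      exact (hderiv q x).sub ((Real.hasDerivAt_log (ne_of_gt hxpos)).const_mul c)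
    have hg : MonotoneOn (fun s => F s q - c * Real.log s) (Set.Ici s0) := by
      refine monotoneOn_of_deriv_nonneg (convex_Ici s0)
        ((hFcont q).continuousOn.sub (continuousOn_const.mul hlogcont)) ?_ ?_
      · intro x hx
        rw [interior_Ici] at hx
        exact ((hder x (Set.mem_Ici.mpr (le_of_lt hx))).differentiableAt).differentiableWithinAt
      · intro x hx
        rw [interior_Ici] at hx
        have hxpos : 0 < x := lt_trans hs0 hx
        rw [(hder x (Set.mem_Ici.mpr (le_of_lt hx))).deriv]
        obtain ⟨h1, h2⟩ := hd2 q x (le_of_lt hx)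
        have hmle : F s0 q ≤ F x q :=
          ((hmono q).monotoneOn) Set.self_mem_Ici (Set.mem_Ici.mpr (le_of_lt hx)) (le_of_lt hx)
        have hcx : c ≤ x * ⟪gradient H (x • p + qEmb n l q), p⟫ := by nlinarith
        have hdiv : c * x⁻¹ ≤ ⟪gradient H (x • p + qEmb n l q), p⟫ := by
          calc c * x⁻¹ ≤ (x * ⟪gradient H (x • p + qEmb n l q), p⟫) * x⁻¹ :=
                mul_le_mul_of_nonneg_right hcx (inv_nonneg.mpr hxpos.le)
            _ = ⟪gradient H (x • p + qEmb n l q), p⟫ := by field_simp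
        linarith
    set s1 : ℝ := max s0 (Real.exp ((M - F s0 q) / c + Real.log s0)) with hs1def
    have hs1 : s0 ≤ s1 := le_max_left _ _
    have hs1pos : 0 < s1 := lt_of_lt_of_le hs0 hs1
    have hlog : (M - F s0 q) / c + Real.log s0 ≤ Real.log s1 :=
      (Real.le_log_iff_exp_le hs1pos).mpr (le_max_right _ _)
    have hgapp : F s0 q - c * Real.log s0 ≤ F s1 q - c * Real.log s1 :=
      hg Set.self_mem_Ici hs1 hs1
    have hkey : c * ((M - F s0 q) / c) = M - F s0 q := mul_div_cancel₀ _ (ne_of_gt hc)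
    have hMle : M ≤ F s1 q := by nlinarith [mul_le_mul_of_nonneg_left hlog hc.le]
    obtain ⟨s, hsmem, hsval⟩ :=
      intermediate_value_Icc hs1 ((hFcont q).continuousOn) ⟨hF0lt.le, hMle⟩
    have hspos : 0 < s := lt_of_lt_of_le hs0 hsmem.1
    refine ⟨s, ⟨hspos, hsval⟩, ?_⟩
    rintro t ⟨ht0, htM⟩
    exact (hmono q).injOn (Set.mem_Ici.mpr (le_of_lt (habove q t ht0 htM))) (Set.mem_Ici.mpr (le_of_lt (habove q s hspos hsval)))
      (htM.trans hsval.symm)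
  -- the function σ
  set σ : EuclideanSpace ℝ (Fin l) → ℝ := fun q => (hEU q).exists.choose with hσdef
  have hσspec : ∀ q, 0 < σ q ∧ F (σ q) q = M := fun q => (hEU q).exists.choose_spec
  have hσuniq : ∀ q t, 0 < t → F t q = M → t = σ q := fun q t h1 h2 =>
    (hEU q).unique ⟨h1, h2⟩ (hσspec q)
  -- smoothness
  have hFzcd : ContDiff ℝ 2
      (fun z : ℝ × EuclideanSpace ℝ (Fin l) => H (z.1 • p + qEmb n l z.2)) := by
    apply hH0.comp
    exact (contDiff_fst.smul contDiff_const).add ((qEmbL n l).contDiff.comp contDiff_snd)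
  have hσcd : ContDiff ℝ 2 σ := by
    rw [contDiff_iff_contDiffAt]
    intro q0
    set a : ℝ × EuclideanSpace ℝ (Fin l) := (σ q0, q0) with hadef
    set Fz : ℝ × EuclideanSpace ℝ (Fin l) → ℝ :=
      fun z => H (z.1 • p + qEmb n l z.2) with hFzdef
    set Φ : ℝ × EuclideanSpace ℝ (Fin l) → ℝ × EuclideanSpace ℝ (Fin l) :=
      fun z => (Fz z, z.2) with hΦdef
    have hΦcd : ContDiff ℝ 2 Φ := hFzcd.prodMk contDiff_snd
    set D : ℝ × EuclideanSpace ℝ (Fin l) →L[ℝ] ℝ := fderiv ℝ Fz a with hDdef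
    have hDF : HasFDerivAt Fz D a := ((hFzcd.differentiable (by simp)) a).hasFDerivAt
    set κ : ℝ := ⟪gradient H (σ q0 • p + qEmb n l q0), p⟫ with hκdef
    have hs0σ : s0 ≤ σ q0 := le_of_lt (habove q0 _ (hσspec q0).1 (hσspec q0).2)
    have hκpos : 0 < κ := hdpos q0 _ hs0σ
    have hD1 : D (1, 0) = κ := by
      have h1 : HasDerivAt (fun t => Fz (t, q0)) (D (1, 0)) (σ q0) :=
        by have := hDF.comp_hasDerivAt (σ q0) ((hasDerivAt_id (σ q0)).prodMk (hasDerivAt_const (σ q0) q0)); exact this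
      exact h1.unique (hderiv q0 (σ q0))
    set A := auxEquiv D κ (ne_of_gt hκpos) hD1 with hAdef
    have hΦA : HasFDerivAt Φ
        (A : ℝ × EuclideanSpace ℝ (Fin l) →L[ℝ] ℝ × EuclideanSpace ℝ (Fin l)) a := by
      rw [hAdef, auxEquiv_coe]
      exact hDF.prodMk (hasFDerivAt_snd)
    have h12 : (2 : WithTop ℕ∞) ≠ 0 := by simp
    set g := (hΦcd.contDiffAt).localInverse hΦA h12 with hgdef
    have hga : g (Φ a) = a := ContDiffAt.localInverse_apply_image _ _ _
    have hgcd : ContDiffAt ℝ 2 g (Φ a) := (hΦcd.contDiffAt).to_localInverse hΦA h12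
    have hright : ∀ᶠ y in nhds (Φ a), Φ (g y) = y :=
      ((hΦcd.contDiffAt).hasStrictFDerivAt' hΦA h12).eventually_right_inverse
    have hΦaval : Φ a = (M, q0) := by
      have hFa : Fz a = M := (hσspec q0).2
      show (Fz a, a.2) = (M, q0)
      rw [hFa]
    have h1cd : ContDiffAt ℝ 2 (fun q => g ((M : ℝ), q)) q0 := by
      refine ContDiffAt.comp q0 ?_ ((contDiff_const.prodMk contDiff_id).contDiffAt)
      rw [← hΦaval] at *
      exact hgcd
    have hscd : ContDiffAt ℝ 2 (fun q => (g ((M : ℝ), q)).1) q0 :=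
      contDiff_fst.comp_contDiffAt q0 h1cd
    have hq0val : g ((M : ℝ), q0) = a := by rw [← hΦaval]; exact hga
    have htend : Filter.Tendsto (fun q : EuclideanSpace ℝ (Fin l) => ((M : ℝ), q))
        (nhds q0) (nhds (Φ a)) := by
      rw [hΦaval]
      exact (continuous_const.prodMk continuous_id).continuousAt
    have hev1 : ∀ᶠ qq in nhds q0, Φ (g ((M : ℝ), qq)) = ((M : ℝ), qq) :=
      htend.eventually hright
    have hposq0 : 0 < (g ((M : ℝ), q0)).1 := by rw [hq0val]; exact (hσspec q0).1
    have hev2 : ∀ᶠ qq in nhds q0, 0 < (g ((M : ℝ), qq)).1 :=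
      (hscd.continuousAt).eventually (eventually_gt_nhds hposq0)
    have heq : (fun q => (g ((M : ℝ), q)).1) =ᶠ[nhds q0] σ := by
      filter_upwards [hev1, hev2] with qq h1 h2
      have hq2 : (g ((M : ℝ), qq)).2 = qq := congrArg Prod.snd h1
      have hF : Fz (g ((M : ℝ), qq)) = M := congrArg Prod.fst h1
      have hF' : F ((g ((M : ℝ), qq)).1) ((g ((M : ℝ), qq)).2) = M := hF
      rw [hq2] at hF'
      exact hσuniq qq _ h2 hF'
    exact hscd.congr_of_eventuallyEq heq.symm
  refine ⟨hEU, σ, ⟨fun q => (hσspec q).1, fun q => (hσspec q).2, hσcd, ?_⟩, ?_⟩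
  · intro q m
    have h := (hσspec (q + intVec l m)).2
    have h' : F (σ (q + intVec l m)) q = M := by
      show H (σ (q + intVec l m) • p + qEmb n l q) = M
      rw [← hH1 (σ (q + intVec l m) • p + qEmb n l q) m, add_assoc, ← qEmb_add_intVec]
      exact h
    exact hσuniq q _ (hσspec (q + intVec l m)).1 h'
  · rintro σ' ⟨h1, h2⟩
    funext q
    exact hσuniq q (σ' q) (h1 q) (h2 q)
end
end

section
/- Let n ≥ 1, 1 ≤ ℓ ≤ 2n, and let X: R^{2n} → R^{2n} be locally Lipschitz with X(x + (0,m)) = X(x) for all x ∈ R^{2n} and m ∈ Z^ℓ. For i = 1, 2 let cᵢ ∈ R \ {0}, kᵢ ∈ Z^ℓ \ {0}, and let wᵢ: R → R^{2n} be differentiable with wᵢ'(t) = cᵢ·X(wᵢ(t)) and wᵢ(t+1) = wᵢ(t) + (0,kᵢ) for all t ∈ R. If the projected orbits coincide, i.e. w₁(R) + {0}×Z^ℓ = w₂(R) + {0}×Z^ℓ, then k₁ = (c₁/c₂)·k₂; in particular c₁/c₂ is rational and c₁/c₂ = ε·|k₁|/|k₂| for some ε ∈ {1, −1}. -/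
noncomputable section
open scoped RealInnerProductSpace

/-- `z(ℝ) + {0}×ℤ^ℓ`: the orbit saturated by the lattice `{0}×ℤ^ℓ`. -/
def orbitLat (n l : ℕ) (z : ℝ → E2 n) : Set (E2 n) :=
  {y | ∃ (t : ℝ) (m : Fin l → ℤ), y = z t + qVec n l m}

/-- Uniqueness of solutions of an autonomous ODE with locally Lipschitz right-hand side. -/
lemma ode_unique_aux {E : Type*} [NormedAddCommGroup E] [NormedSpace ℝ E] {F : E → E}
    (hF : LocallyLipschitz F) {f g : ℝ → E}
    (hf : ∀ t : ℝ, HasDerivAt f (F (f t)) t) (hg : ∀ t : ℝ, HasDerivAt g (F (g t)) t)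
    (h0 : f 0 = g 0) : ∀ t : ℝ, f t = g t := by
  have hfc : Continuous f := continuous_iff_continuousAt.2 fun t => (hf t).continuousAt
  have hgc : Continuous g := continuous_iff_continuousAt.2 fun t => (hg t).continuousAt
  set S : Set ℝ := {t | f t = g t} with hS
  have hclosed : IsClosed S := isClosed_eq hfc hgc
  have hopen : IsOpen S := by
    rw [isOpen_iff_mem_nhds]
    intro t₁ ht₁
    obtain ⟨K, s, hs, hK⟩ := hF (f t₁)
    have hfs : ∀ᶠ t in nhds t₁, HasDerivAt f (F (f t)) t ∧ f t ∈ s :=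
      Filter.Eventually.and (Filter.Eventually.of_forall hf)
        (hfc.continuousAt.preimage_mem_nhds hs)
    have hgs : ∀ᶠ t in nhds t₁, HasDerivAt g (F (g t)) t ∧ g t ∈ s := by
      refine Filter.Eventually.and (Filter.Eventually.of_forall hg) ?_
      have ht₁' : f t₁ = g t₁ := ht₁
      exact hgc.continuousAt.preimage_mem_nhds (ht₁' ▸ hs)
    have heq : f =ᶠ[nhds t₁] g :=
      ODE_solution_unique_of_eventually (v := fun _ y => F y) (s := fun _ => s)
        (Filter.Eventually.of_forall fun _ => hK) hfs hgs ht₁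
    exact heq
  have : S = Set.univ := IsClopen.eq_univ ⟨hclosed, hopen⟩ ⟨0, h0⟩
  intro t
  have : t ∈ S := this ▸ Set.mem_univ t
  exact this

/-- Proposition 4.1: two rotation-type trajectories of rescalings `c₁·X`, `c₂·X` of the
same `ℤ^ℓ`-periodic vector field whose projected orbits coincide have proportional
rotation vectors: `k₁ = (c₁/c₂)·k₂`; in particular `c₁/c₂ ∈ ℚ` and
`c₁/c₂ = ±|k₁|/|k₂|`. -/
theorem coinciding_orbits_proportional_rotation_vectors
    (n l : ℕ) (hn : 1 ≤ n) (hl : 1 ≤ l) (hl2 : l ≤ 2*n)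
    (X : E2 n → E2 n) (hXlip : LocallyLipschitz X)
    (hXper : ∀ (x : E2 n) (m : Fin l → ℤ), X (x + qVec n l m) = X x)
    (c₁ c₂ : ℝ) (hc₁ : c₁ ≠ 0) (hc₂ : c₂ ≠ 0)
    (k₁ k₂ : Fin l → ℤ) (hk₁ : k₁ ≠ 0) (hk₂ : k₂ ≠ 0)
    (w₁ w₂ : ℝ → E2 n)
    (hw₁ : ∀ t : ℝ, HasDerivAt w₁ (c₁ • X (w₁ t)) t)
    (hw₂ : ∀ t : ℝ, HasDerivAt w₂ (c₂ • X (w₂ t)) t)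
    (hp₁ : ∀ t : ℝ, w₁ (t + 1) = w₁ t + qVec n l k₁)
    (hp₂ : ∀ t : ℝ, w₂ (t + 1) = w₂ t + qVec n l k₂)
    (horb : orbitLat n l w₁ = orbitLat n l w₂) :
    (∀ i : Fin l, (k₁ i : ℝ) = (c₁ / c₂) * (k₂ i : ℝ)) ∧
    (∃ q : ℚ, c₁ / c₂ = (q : ℝ)) ∧
    ∃ ε : ℝ, (ε = 1 ∨ ε = -1) ∧
      c₁ / c₂ = ε * (‖intVec l k₁‖ / ‖intVec l k₂‖) := by
  set lam : ℝ := c₁ / c₂ with hlam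
  have hlamne : lam ≠ 0 := div_ne_zero hc₁ hc₂
  have hlamc : lam * c₂ = c₁ := div_mul_cancel₀ c₁ hc₂
  -- initial point of w₁ lies on the saturated orbit of w₂
  have hq0 : qVec n l (0 : Fin l → ℤ) = 0 := by
    ext i; simp [qVec]
  have hmem : w₁ 0 ∈ orbitLat n l w₂ := by
    rw [← horb]; exact ⟨0, 0, by rw [hq0]; simp⟩
  obtain ⟨t₀, m₀, ht₀⟩ := hmem
  -- the comparison trajectory
  set v : ℝ → E2 n := fun t => w₂ (lam * t + t₀) + qVec n l m₀ with hv
  have hvderiv : ∀ t : ℝ, HasDerivAt v (c₁ • X (v t)) t := by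
    intro t
    have haff : HasDerivAt (fun t : ℝ => lam * t + t₀) lam t := by
      simpa using ((hasDerivAt_id t).const_mul lam).add_const t₀
    have h1 : HasDerivAt (fun t : ℝ => w₂ (lam * t + t₀))
        (lam • (c₂ • X (w₂ (lam * t + t₀)))) t :=
      (hw₂ (lam * t + t₀)).scomp t haff
    have h2 : HasDerivAt v (lam • (c₂ • X (w₂ (lam * t + t₀)))) t := h1.add_const _
    have h3 : lam • (c₂ • X (w₂ (lam * t + t₀))) = c₁ • X (v t) := by
      rw [hv]; simp only []
      rw [hXper (w₂ (lam * t + t₀)) m₀, smul_smul, hlamc]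
    rwa [h3] at h2
  -- locally Lipschitz scaled field
  have hFlip : LocallyLipschitz (fun y => c₁ • X y) := by
    intro x
    obtain ⟨K, s, hs, hK⟩ := hXlip x
    exact ⟨‖c₁‖₊ * K, s, hs, (lipschitzWith_smul c₁).comp_lipschitzOnWith hK⟩
  -- uniqueness: w₁ = v
  have huniq : ∀ t : ℝ, w₁ t = v t := by
    refine ode_unique_aux hFlip hw₁ hvderiv ?_
    rw [hv]; simp only []
    rw [mul_zero, zero_add]
    exact ht₀
  -- translation identity for w₂
  have hshift : ∀ s : ℝ, w₂ (s + lam) = w₂ s + qVec n l k₁ := by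
    intro s
    have h1 := hp₁ ((s - t₀) / lam)
    rw [huniq, huniq] at h1
    have e1 : lam * ((s - t₀) / lam) + t₀ = s := by field_simp; ring
    have e2 : lam * ((s - t₀) / lam + 1) + t₀ = s + lam := by field_simp; ring
    rw [hv] at h1
    simp only [e1, e2] at h1
    have := h1
    -- w₂ (s+lam) + qVec m₀ = (w₂ s + qVec m₀) + qVec k₁
    have h2 : w₂ (s + lam) + qVec n l m₀ = w₂ s + qVec n l k₁ + qVec n l m₀ := by
      rw [this]; abel
    exact add_right_cancel h2
  -- the bounded auxiliary function
  set h : ℝ → E2 n := fun s => w₂ s - s • qVec n l k₂ with hh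
  have hper : Function.Periodic h 1 := by
    intro s
    rw [hh]; simp only []
    rw [hp₂ s, add_smul, one_smul]
    abel
  have hcont : Continuous h := by
    have : Continuous w₂ := continuous_iff_continuousAt.2 fun t => (hw₂ t).continuousAt
    exact this.sub (continuous_id.smul continuous_const)
  obtain ⟨C, hC⟩ := (isCompact_Icc : IsCompact (Set.Icc (0:ℝ) 1)).exists_bound_of_continuousOn
    hcont.continuousOn
  have hbound : ∀ s : ℝ, ‖h s‖ ≤ C := by
    intro s
    have heq : h s = h (Int.fract s) := by
      have h5 := hper.sub_int_mul_eq (x := s) ⌊s⌋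
      rw [mul_one] at h5
      exact h5.symm
    rw [heq]
    exact hC _ ⟨Int.fract_nonneg s, (Int.fract_lt_one s).le⟩
  -- the drift vector
  set d : E2 n := qVec n l k₁ - lam • qVec n l k₂ with hd
  have hstep : ∀ s : ℝ, h (s + lam) = h s + d := by
    intro s
    rw [hh]; simp only []
    rw [hshift s, hd, add_smul]
    abel
  have hiter : ∀ N : ℕ, h ((N : ℝ) * lam) = h 0 + (N : ℝ) • d := by
    intro N
    induction N with
    | zero => simp
    | succ N ih =>
      have : ((N + 1 : ℕ) : ℝ) * lam = (N : ℝ) * lam + lam := by push_cast; ring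
      rw [this, hstep, ih]
      push_cast
      rw [add_smul, one_smul]
      abel
  have hdzero : d = 0 := by
    by_contra hne
    have hdpos : 0 < ‖d‖ := norm_pos_iff.2 hne
    obtain ⟨N, hN⟩ := exists_nat_gt ((C + C) / ‖d‖)
    have h1 : ‖(N : ℝ) • d‖ = ‖h ((N : ℝ) * lam) - h 0‖ := by rw [hiter]; congr 1; abel
    have h2 : ‖h ((N : ℝ) * lam) - h 0‖ ≤ C + C := by
      calc ‖h ((N : ℝ) * lam) - h 0‖ ≤ ‖h ((N : ℝ) * lam)‖ + ‖h 0‖ := norm_sub_le _ _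
        _ ≤ C + C := add_le_add (hbound _) (hbound _)
    have h3 : (N : ℝ) * ‖d‖ ≤ C + C := by
      have := h1 ▸ h2
      rwa [norm_smul, Real.norm_natCast] at this
    have h4 : (C + C) / ‖d‖ < (N : ℝ) := hN
    rw [div_lt_iff₀ hdpos] at h4
    linarith
  -- componentwise proportionality
  have hcomp : ∀ i : Fin l, (k₁ i : ℝ) = lam * (k₂ i : ℝ) := by
    intro i
    have hij : (2*n - l + (i : ℕ)) < 2*n := by have := i.isLt; omega
    set j : Fin (2*n) := ⟨2*n - l + (i : ℕ), hij⟩ with hj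
    have hqv : ∀ m : Fin l → ℤ, qVec n l m j = (m i : ℝ) := by
      intro m
      simp only [qVec, WithLp.ofLp_toLp]
      have hle : 2*n - l ≤ (j : ℕ) := by simp [hj]
      rw [dif_pos hle]
      congr 1
      congr 1
      apply Fin.ext
      simp only [hj]
      omega
    have := congrArg (fun x : E2 n => x j) hdzero
    have hz : qVec n l k₁ j - (lam • qVec n l k₂) j = 0 := by
      have hs : (qVec n l k₁ - lam • qVec n l k₂) j
          = qVec n l k₁ j - (lam • qVec n l k₂) j := rfl
      rw [← hs]
      rw [hd] at this
      exact this
    have hsm : (lam • qVec n l k₂) j = lam * qVec n l k₂ j := rfl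
    rw [hsm, hqv, hqv] at hz
    linarith
  refine ⟨hcomp, ?_, ?_⟩
  · -- rationality
    obtain ⟨i, hi⟩ := Function.ne_iff.1 hk₂
    have hki : (k₂ i : ℝ) ≠ 0 := Int.cast_ne_zero.2 hi
    refine ⟨(k₁ i : ℚ) / (k₂ i : ℚ), ?_⟩
    have := hcomp i
    rw [hlam] at this ⊢
    push_cast
    field_simp at this ⊢
    linarith
  · -- sign form
    have hint : intVec l k₁ = lam • intVec l k₂ := by
      ext i
      have : (lam • intVec l k₂) i = lam * intVec l k₂ i := rfl
      rw [this, intVec, intVec]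
      exact hcomp i
    have hk₂n : intVec l k₂ ≠ 0 := by
      obtain ⟨i, hi⟩ := Function.ne_iff.1 hk₂
      intro hcon
      have h2 : ((k₂ i : ℝ)) = 0 := congrArg (fun x : EuclideanSpace ℝ (Fin l) => x i) hcon
      apply hi
      rw [Pi.zero_apply]
      exact_mod_cast h2
    have hk₂pos : 0 < ‖intVec l k₂‖ := norm_pos_iff.2 hk₂n
    have hnorm : ‖intVec l k₁‖ = |lam| * ‖intVec l k₂‖ := by
      rw [hint, norm_smul, Real.norm_eq_abs]
    have habs : |lam| = ‖intVec l k₁‖ / ‖intVec l k₂‖ := by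
      rw [hnorm]; field_simp
    rcases lt_or_gt_of_ne hlamne with hneg | hpos
    · exact ⟨-1, Or.inr rfl, by rw [← habs, abs_of_neg hneg]; ring⟩
    · exact ⟨1, Or.inl rfl, by rw [← habs, abs_of_pos hpos]; ring⟩
end
end
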